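/- Let P be a Köthe set on ℕ such that P ∼ P² (condition (B)) and p_n ≥ 1 for all p ∈ P and all n ∈ ℕ. Suppose there exist p ∈ P and k ∈ ℕ such that n ≤ p_n^k for all n ∈ ℕ (equivalently, sup_n (log n)/(log p_n) < ∞ for some p ∈ P). Then P satisfies condition (N): for every p ∈ P there exist q ∈ P and α ∈ ℓ¹(ℕ) with p_n ≤ α_n q_n for all n; equivalently, λ(P) is nuclear. -/

import Mathlib

/-- Let `P` be a Köthe set on `ℕ` satisfying condition (B) (`P ∼ P²`) and
`pₙ ≥ 1` for all `p ∈ P`, `n`. If there are `p ∈ P` and `k ∈ ℕ` with `n ≤ pₙ^k` for all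
`n`, then `P` satisfies condition (N), i.e. `λ(P)` is nuclear. -/
theorem kothe_nuclear_of_log_condition (P : Set (ℕ → ℝ))
    (hP1 : ∀ n, ∃ p ∈ P, 0 < p n)
    (hP2 : ∀ p ∈ P, ∀ q ∈ P, ∃ r ∈ P, ∀ n, max (p n) (q n) ≤ r n)
    (hB1 : ∀ p ∈ P, ∃ q ∈ P, ∃ C : ℝ, 0 < C ∧ ∀ n, p n ≤ C * (q n) ^ 2)
    (hB2 : ∀ q ∈ P, ∃ p ∈ P, ∃ C : ℝ, 0 < C ∧ ∀ n, (q n) ^ 2 ≤ C * p n)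
    (hge1 : ∀ p ∈ P, ∀ n, 1 ≤ p n)
    (hlog : ∃ p ∈ P, ∃ k : ℕ, ∀ n : ℕ, (n : ℝ) ≤ (p n) ^ k) :
    ∀ p ∈ P, ∃ q ∈ P, ∃ α : ℕ → ℝ, (Summable fun n => |α n|) ∧
      ∀ n, p n ≤ α n * q n := by
  -- Iterated squaring: for every m and p ∈ P there is q ∈ P with p^(2^m) ≤ C q.
  have iter : ∀ m : ℕ, ∀ p ∈ P, ∃ q ∈ P, ∃ C : ℝ, 0 < C ∧
      ∀ n, (p n) ^ (2 ^ m) ≤ C * q n := by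
    intro m
    induction m with
    | zero =>
      intro p hp
      exact ⟨p, hp, 1, one_pos, fun n => by simp⟩
    | succ m ih =>
      intro p hp
      obtain ⟨q, hq, C, hC, hle⟩ := ih p hp
      obtain ⟨r, hr, C', hC', hle'⟩ := hB2 q hq
      refine ⟨r, hr, C ^ 2 * C', by positivity, fun n => ?_⟩
      have hpn : (0 : ℝ) ≤ p n := le_trans zero_le_one (hge1 p hp n)
      have hqn : (0 : ℝ) ≤ q n := le_trans zero_le_one (hge1 q hq n)
      have h1 : (p n) ^ (2 ^ (m + 1)) = ((p n) ^ (2 ^ m)) ^ 2 := by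
        rw [← pow_mul, pow_succ]
      calc (p n) ^ (2 ^ (m + 1)) = ((p n) ^ (2 ^ m)) ^ 2 := h1
        _ ≤ (C * q n) ^ 2 := by
            apply pow_le_pow_left₀ (by positivity) (hle n)
        _ = C ^ 2 * (q n) ^ 2 := by ring
        _ ≤ C ^ 2 * (C' * r n) := by nlinarith [hle' n, sq_nonneg C]
        _ = C ^ 2 * C' * r n := by ring
  intro p hp
  obtain ⟨p₀, hp₀, k, hk⟩ := hlog
  obtain ⟨t₀, ht₀, C₀, hC₀, h₀⟩ := iter (2 * k) p₀ hp₀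
  obtain ⟨s, hs, hmax⟩ := hP2 p hp t₀ ht₀
  obtain ⟨t, ht, C₁, hC₁, h₁⟩ := hB2 s hs
  have ht1 : ∀ n, 1 ≤ t n := hge1 t ht
  have key : ∀ n : ℕ, p n * (n : ℝ) ^ 2 ≤ (C₀ * C₁) * t n := by
    intro n
    have hp0n : (1 : ℝ) ≤ p₀ n := hge1 p₀ hp₀ n
    have h1 : (n : ℝ) ^ 2 ≤ (p₀ n) ^ (2 * k) := by
      rw [mul_comm 2 k, pow_mul]
      exact pow_le_pow_left₀ (Nat.cast_nonneg n) (hk n) 2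
    have h2 : (p₀ n) ^ (2 * k) ≤ (p₀ n) ^ (2 ^ (2 * k)) := by
      exact pow_le_pow_right₀ hp0n (le_of_lt (Nat.lt_two_pow_self))
    have h3 : p n ≤ s n := le_trans (le_max_left _ _) (hmax n)
    have h4 : t₀ n ≤ s n := le_trans (le_max_right _ _) (hmax n)
    have hpn : (1 : ℝ) ≤ p n := hge1 p hp n
    have hsn : (1 : ℝ) ≤ s n := hge1 s hs n
    have ht0n : (1 : ℝ) ≤ t₀ n := hge1 t₀ ht₀ n
    have hchain : (n : ℝ) ^ 2 ≤ C₀ * t₀ n := (h1.trans h2).trans (h₀ n)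
    calc p n * (n : ℝ) ^ 2 ≤ p n * (C₀ * t₀ n) := by
          apply mul_le_mul_of_nonneg_left hchain (by linarith)
      _ ≤ s n * (C₀ * s n) := by
          apply mul_le_mul h3 (mul_le_mul_of_nonneg_left h4 hC₀.le)
            (by positivity) (by linarith)
      _ = C₀ * (s n) ^ 2 := by ring
      _ ≤ C₀ * (C₁ * t n) := by nlinarith [h₁ n]
      _ = (C₀ * C₁) * t n := by ring
  refine ⟨t, ht, fun n => p n / t n, ?_, fun n => ?_⟩
  · rw [← summable_nat_add_iff (f := fun n => |p n / t n|) 1]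
    have hcomp : Summable (fun n : ℕ => (C₀ * C₁) * (1 / ((n : ℝ) + 1) ^ 2)) := by
      have h2 : Summable (fun n : ℕ => 1 / ((n : ℝ)) ^ 2) :=
        Real.summable_one_div_nat_pow.mpr one_lt_two
      have h3 : Summable (fun n : ℕ => 1 / (((n + 1 : ℕ) : ℝ)) ^ 2) :=
        (summable_nat_add_iff (f := fun n : ℕ => 1 / ((n : ℝ)) ^ 2) 1).mpr h2
      have h4 : Summable (fun n : ℕ => 1 / ((n : ℝ) + 1) ^ 2) := by
        simpa [Nat.cast_add] using h3
      exact h4.mul_left _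
    apply Summable.of_nonneg_of_le (fun n => abs_nonneg _) _ hcomp
    intro n
    have htpos : (0 : ℝ) < t (n + 1) := lt_of_lt_of_le one_pos (ht1 (n + 1))
    have hppos : (0 : ℝ) ≤ p (n + 1) := le_trans zero_le_one (hge1 p hp (n + 1))
    rw [abs_of_nonneg (div_nonneg hppos (le_of_lt htpos))]
    rw [div_le_iff₀ htpos]
    have hkey := key (n + 1)
    have hcast : ((n + 1 : ℕ) : ℝ) = (n : ℝ) + 1 := by push_cast; ring
    rw [hcast] at hkey
    have hnpos : (0 : ℝ) < ((n : ℝ) + 1) ^ 2 := by positivity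
    have heq : C₀ * C₁ * (1 / ((n : ℝ) + 1) ^ 2) * t (n + 1) =
        (C₀ * C₁ * t (n + 1)) / (((n : ℝ) + 1) ^ 2) := by ring
    rw [heq, le_div_iff₀ hnpos]
    linarith
  · have htpos : (0 : ℝ) < t n := lt_of_lt_of_le one_pos (ht1 n)
    rw [div_mul_cancel₀ _ (ne_of_gt htpos)]
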